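/- Binomial balance lower bound: for all integers 1 ≤ k' < k, letting l = min{k', k − k'} and α = (k − k')/k, we have C(k, k') · α^{k−k'} · (1−α)^{k'} ≥ 1/2^{2l}. -/

import Mathlib

lemma aux_ratio_pow_le_choose : ∀ (l k : ℕ), l ≤ k → ((k : ℝ) / l) ^ l ≤ Nat.choose k l := by
  intro l
  induction l with
  | zero => intro k _; simp
  | succ l ih =>
    intro k hk
    obtain ⟨m, rfl⟩ : ∃ m, k = m + 1 := ⟨k - 1, by omega⟩
    have hlm : l ≤ m := by omega
    have hchoose : ((m + 1).choose (l + 1) : ℝ) = (m + 1) / (l + 1) * (m.choose l) := by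
      have := Nat.add_one_mul_choose_eq m l
      have : ((m + 1) * m.choose l : ℝ) = ((m + 1).choose (l + 1) : ℝ) * (l + 1) := by
        exact_mod_cast congrArg (Nat.cast (R := ℝ)) this
      field_simp
      linarith [this]
    have hbase : ((m + 1 : ℕ) : ℝ) / (l + 1) ≤ (m : ℝ) / l ∨ l = 0 := by
      rcases Nat.eq_zero_or_pos l with h | h
      · right; exact h
      · left
        rw [div_le_div_iff₀ (by positivity) (by exact_mod_cast h)]
        push_cast
        have hlm' : (l : ℝ) ≤ m := by exact_mod_cast hlm
        nlinarith
    have hpos : (0 : ℝ) ≤ ((m + 1 : ℕ) : ℝ) / (l + 1) := by positivity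
    calc ((↑(m + 1) : ℝ) / ↑(l + 1)) ^ (l + 1)
        = ((m + 1 : ℕ) : ℝ) / (l + 1) * (((m + 1 : ℕ) : ℝ) / (l + 1)) ^ l := by
          push_cast; ring
      _ ≤ ((m + 1 : ℕ) : ℝ) / (l + 1) * ((m : ℝ) / l) ^ l := by
          rcases hbase with h | h
          · exact mul_le_mul_of_nonneg_left (pow_le_pow_left₀ hpos h l) hpos
          · subst h; simp
      _ ≤ ((m + 1 : ℕ) : ℝ) / (l + 1) * (m.choose l : ℝ) := by
          exact mul_le_mul_of_nonneg_left (ih m hlm) hpos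
      _ = ((m + 1).choose (l + 1) : ℝ) := by rw [hchoose]; push_cast; ring

lemma aux_key (k l : ℕ) (h1 : 1 ≤ l) (h2 : 2 * l ≤ k) :
    (1 : ℝ) / 2 ^ (2 * l)
      ≤ (Nat.choose k l : ℝ) * (((k - l : ℕ) : ℝ) / k) ^ (k - l) * ((l : ℝ) / k) ^ l := by
  have hk : 0 < k := by omega
  have hk' : (0 : ℝ) < k := by exact_mod_cast hk
  have hl' : (0 : ℝ) < l := by exact_mod_cast h1
  have hA : (((k - l : ℕ) : ℝ) / k) = 1 - (l : ℝ) / k := by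
    have : ((k - l : ℕ) : ℝ) = (k : ℝ) - l := by
      push_cast [Nat.cast_sub (by omega : l ≤ k)]; ring
    rw [this]; field_simp
  set A : ℝ := ((k - l : ℕ) : ℝ) / k with hAdef
  have hA0 : 0 ≤ A := by positivity
  have hA1 : A ≤ 1 := by
    rw [hA]
    have : 0 ≤ (l : ℝ) / k := by positivity
    linarith
  -- Step 1: C(k,l) * (l/k)^l ≥ 1
  have step1 : (1 : ℝ) ≤ (Nat.choose k l : ℝ) * ((l : ℝ) / k) ^ l := by
    have h := aux_ratio_pow_le_choose l k (by omega)
    have hpos : (0 : ℝ) < ((l : ℝ) / k) ^ l := by positivity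
    have := mul_le_mul_of_nonneg_right h (le_of_lt hpos)
    calc (1 : ℝ) = ((k : ℝ) / l * ((l : ℝ) / k)) ^ l := by
            rw [div_mul_div_comm, mul_comm]
            rw [div_self (by positivity)]; simp
      _ = ((k : ℝ) / l) ^ l * ((l : ℝ) / k) ^ l := mul_pow _ _ _
      _ ≤ (Nat.choose k l : ℝ) * ((l : ℝ) / k) ^ l := this
  -- Step 2: A^(k-l) ≥ A^k
  have step2 : A ^ k ≤ A ^ (k - l) := pow_le_pow_of_le_one hA0 hA1 (by omega)
  -- Step 3: A^k ≥ (1/2)^(2l)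
  have step3 : ((1 : ℝ) / 2) ^ (2 * l) ≤ A ^ k := by
    have hw1 : (0 : ℝ) ≤ 1 - 2 * l / k := by
      rw [sub_nonneg, div_le_one hk']
      exact_mod_cast h2
    have hw2 : (0 : ℝ) ≤ 2 * l / k := by positivity
    have hgm := Real.geom_mean_le_arith_mean2_weighted hw1 hw2
      (by norm_num : (0:ℝ) ≤ 1) (by norm_num : (0:ℝ) ≤ (1:ℝ)/2) (by ring)
    rw [Real.one_rpow, one_mul] at hgm
    have hgm' : ((1:ℝ)/2) ^ ((2 * (l:ℝ) / k : ℝ)) ≤ A := by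
      rw [hA]
      calc ((1:ℝ)/2) ^ ((2 * (l:ℝ) / k : ℝ))
          ≤ (1 - 2 * (l:ℝ) / k) * 1 + 2 * (l:ℝ) / k * (1/2) := hgm
        _ = 1 - (l:ℝ) / k := by ring
    have hb : (0:ℝ) ≤ ((1:ℝ)/2) ^ ((2 * (l:ℝ) / k : ℝ)) := Real.rpow_nonneg (by norm_num) _
    have hpow := pow_le_pow_left₀ hb hgm' k
    have heq : (((1:ℝ)/2) ^ ((2 * (l:ℝ) / k : ℝ))) ^ k = ((1:ℝ)/2) ^ (2*l) := by
      rw [← Real.rpow_natCast (((1:ℝ)/2) ^ ((2 * (l:ℝ) / k : ℝ))) k,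
          ← Real.rpow_mul (by norm_num : (0:ℝ) ≤ 1/2),
          div_mul_cancel₀ _ (ne_of_gt hk'),
          show (2*(l:ℝ)) = ((2*l : ℕ) : ℝ) by push_cast; ring,
          Real.rpow_natCast]
    rw [heq] at hpow
    exact hpow
  calc (1 : ℝ) / 2 ^ (2 * l) = ((1 : ℝ) / 2) ^ (2 * l) := by rw [div_pow]; norm_num
    _ ≤ A ^ k := step3
    _ ≤ A ^ (k - l) := step2
    _ = 1 * A ^ (k - l) := (one_mul _).symm
    _ ≤ (Nat.choose k l : ℝ) * ((l : ℝ) / k) ^ l * A ^ (k - l) := by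
        exact mul_le_mul_of_nonneg_right step1 (by positivity)
    _ = (Nat.choose k l : ℝ) * A ^ (k - l) * ((l : ℝ) / k) ^ l := by ring

/-- Binomial balance lower bound: for `1 ≤ k' < k`, with `l = min(k', k−k')`
and `α = (k−k')/k`, one has `C(k,k') α^{k−k'} (1−α)^{k'} ≥ 1/2^{2l}`. -/
theorem stmt_17 (k k' : ℕ) (h1 : 1 ≤ k') (h2 : k' < k) :
    (Nat.choose k k' : ℝ) * (((k - k' : ℕ) : ℝ) / (k : ℝ)) ^ (k - k')
        * (1 - ((k - k' : ℕ) : ℝ) / (k : ℝ)) ^ k'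
      ≥ 1 / 2 ^ (2 * min k' (k - k')) := by
  have hk : 0 < k := by omega
  have hk' : (0 : ℝ) < k := by exact_mod_cast hk
  have hcast : ((k - k' : ℕ) : ℝ) = (k : ℝ) - k' := by
    push_cast [Nat.cast_sub (le_of_lt h2)]; ring
  have hflip : 1 - ((k - k' : ℕ) : ℝ) / k = (k' : ℝ) / k := by
    rw [hcast]; field_simp; ring
  rw [hflip, ge_iff_le]
  rcases le_or_gt k' (k - k') with hle | hlt
  · have hmin : min k' (k - k') = k' := min_eq_left hle
    rw [hmin]
    have := aux_key k k' h1 (by omega)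
    exact this
  · have hmin : min k' (k - k') = k - k' := min_eq_right (le_of_lt hlt)
    rw [hmin]
    have hkk : k - (k - k') = k' := by omega
    have := aux_key k (k - k') (by omega) (by omega)
    rw [hkk] at this
    have hsymm : Nat.choose k (k - k') = Nat.choose k k' := Nat.choose_symm (le_of_lt h2)
    rw [hsymm] at this
    calc (1 : ℝ) / 2 ^ (2 * (k - k'))
        ≤ (Nat.choose k k' : ℝ) * ((k' : ℝ) / k) ^ k' * (((k - k' : ℕ) : ℝ) / k) ^ (k - k') := this
      _ = (Nat.choose k k' : ℝ) * (((k - k' : ℕ) : ℝ) / k) ^ (k - k') * ((k' : ℝ) / k) ^ k' := by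
          ring
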